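/- With E as above, for η ∈ E and t ≥ 1 define η^{⊠t} := η ∘ ω_t where ω_t is the inverse of Φ_t(x) = x·exp((t−1)u(x)). Then η^{⊠t} ∈ E; that is, there exists a continuous non-increasing function u_t : (−∞,0) → ℝ with η^{⊠t}(x) = x·exp(−u_t(x)), and in fact u_t(Φ_t(x)) = t·u(x) for all x < 0. -/

import Mathlib

open Real Set

/-- for `η ∈ E` (with `η(x) = x·exp(−u(x))`, `u` continuous non-increasing) and
`t ≥ 1`, the map `η^{⊠t} = η ∘ ω_t` (where `ω_t` is the inverse of
`Φ_t(x) = x·exp((t−1)u(x))` on `(−∞,0)`) belongs to `E`; moreover `u_t(Φ_t(x)) = t·u(x)`. -/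
theorem stmt11 (η u : ℝ → ℝ)
    (hu : ContinuousOn u (Iio 0)) (humono : AntitoneOn u (Iio 0))
    (hη : ∀ x ∈ Iio (0:ℝ), η x = x * Real.exp (-u x))
    (t : ℝ) (ht : 1 ≤ t) (ω : ℝ → ℝ)
    (hmaps : ∀ x ∈ Iio (0:ℝ), ω x ∈ Iio (0:ℝ))
    (hinv1 : ∀ x ∈ Iio (0:ℝ), ω x * Real.exp ((t - 1) * u (ω x)) = x)
    (hinv2 : ∀ x ∈ Iio (0:ℝ), ω (x * Real.exp ((t - 1) * u x)) = x) :
    ∃ ut : ℝ → ℝ, ContinuousOn ut (Iio 0) ∧ AntitoneOn ut (Iio 0) ∧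
      (∀ x ∈ Iio (0:ℝ), η (ω x) = x * Real.exp (-ut x)) ∧
      (∀ x ∈ Iio (0:ℝ), ut (x * Real.exp ((t - 1) * u x)) = t * u x) := by
  -- Φ is strictly monotone on Iio 0
  have hΦmono : StrictMonoOn (fun x => x * Real.exp ((t - 1) * u x)) (Iio 0) := by
    intro a ha b hb hab
    have h1 : Real.exp ((t - 1) * u b) ≤ Real.exp ((t - 1) * u a) :=
      Real.exp_le_exp.2 (mul_le_mul_of_nonneg_left (humono ha hb hab.le) (by linarith))
    have ha0 : a < 0 := ha
    have hb0 : b < 0 := hb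
    calc a * Real.exp ((t - 1) * u a) ≤ a * Real.exp ((t - 1) * u b) := by
          exact mul_le_mul_of_nonpos_left h1 ha0.le
      _ < b * Real.exp ((t - 1) * u b) :=
          mul_lt_mul_of_pos_right hab (Real.exp_pos _)
  -- ω is monotone on Iio 0
  have hωmono : MonotoneOn ω (Iio 0) := by
    intro a ha b hb hab
    by_contra h
    push_neg at h
    have := hΦmono (hmaps b hb) (hmaps a ha) h
    simp only at this
    rw [hinv1 a ha, hinv1 b hb] at this
    linarith
  -- ω is continuous on Iio 0
  have hωcont : ContinuousOn ω (Iio 0) := by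
    intro a ha
    apply ContinuousAt.continuousWithinAt
    apply continuousAt_of_monotoneOn_of_image_mem_nhds hωmono (Iio_mem_nhds ha)
    have hsub : Iio (0:ℝ) ⊆ ω '' Iio 0 := by
      intro y hy
      exact ⟨y * Real.exp ((t - 1) * u y),
        mul_neg_of_neg_of_pos hy (Real.exp_pos _), hinv2 y hy⟩
    exact Filter.mem_of_superset (Iio_mem_nhds (hmaps a ha)) hsub
  refine ⟨fun x => t * u (ω x), ?_, ?_, ?_, ?_⟩
  · exact (continuousOn_const.mul (hu.comp hωcont hmaps))
  · intro a ha b hb hab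
    have := humono (hmaps a ha) (hmaps b hb) (hωmono ha hb hab)
    have ht0 : (0:ℝ) ≤ t := by linarith
    exact mul_le_mul_of_nonneg_left this ht0
  · intro x hx
    have hωx := hmaps x hx
    rw [hη (ω x) hωx]
    have h1 := hinv1 x hx
    have : x * Real.exp (-(t * u (ω x))) = ω x * Real.exp (-u (ω x)) := by
      set y := ω x with hy
      rw [← h1, mul_assoc, ← Real.exp_add]
      congr 1
      ring_nf
    simp only [this]
  · intro x hx
    show t * u (ω (x * Real.exp ((t - 1) * u x))) = t * u x
    rw [hinv2 x hx]
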